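/- If n > 10, then the generalized Petersen graph GP(n,2) is not distance-balanced. -/

import Mathlib

set_option maxHeartbeats 10000000
set_option linter.unusedSectionVars false
set_option linter.unnecessarySeqFocus false

/-- The generalized Petersen graph `GP(n,k)`: vertices are `Sum.inl i` (the outer
vertices `u_i`) and `Sum.inr i` (the inner vertices `v_i`) for `i ∈ ZMod n`, with
edges `u_i u_{i+1}`, `v_i v_{i+k}` and spokes `u_i v_i`. -/
def genPetersen (n k : ℕ) : SimpleGraph (ZMod n ⊕ ZMod n) :=
  SimpleGraph.fromRel (fun x y =>
    match x, y with
    | Sum.inl i, Sum.inl j => j = i + 1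
    | Sum.inr i, Sum.inr j => j = i + (k : ZMod n)
    | Sum.inl i, Sum.inr j => i = j
    | _, _ => False)

/-- `W_{xy}`: the set of vertices strictly closer to `x` than to `y`. -/
def closerSet {V : Type*} (G : SimpleGraph V) (x y : V) : Set V :=
  {w | G.dist w x < G.dist w y}

/-- `_xW_y`: the set of vertices equidistant from `x` and `y`. -/
def eqDistSet {V : Type*} (G : SimpleGraph V) (x y : V) : Set V :=
  {w | G.dist w x = G.dist w y}

/-- A graph is `ℓ`-distance-balanced if every pair of vertices at distance `ℓ`
is balanced. -/
def IsLDistBalanced {V : Type*} (G : SimpleGraph V) (ℓ : ℕ) : Prop :=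
  ∀ x y : V, G.dist x y = ℓ → (closerSet G x y).ncard = (closerSet G y x).ncard

/-- A graph is distance-balanced if every pair of adjacent vertices is balanced. -/
def IsDistBalanced {V : Type*} (G : SimpleGraph V) : Prop :=
  ∀ x y : V, G.Adj x y → (closerSet G x y).ncard = (closerSet G y x).ncard

/-! ### Auxiliary distance formulas for `GP(n,2)` -/
namespace GP2Aux

def guu (j : ℕ) : ℕ := min j (j/2 + j%2 + 2)
def guv (j : ℕ) : ℕ := j/2 + j%2 + 1
def gvv (j : ℕ) : ℕ := j/2 + 3*(j%2)
/-- distance from `u_j` to `u_0` -/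
def fuu (n j : ℕ) : ℕ := min (guu j) (guu (n-j))
/-- distance from `v_j` to `u_0`, and from `u_j` to `v_0` -/
def fuv (n j : ℕ) : ℕ := min (guv j) (guv (n-j))
/-- distance from `v_j` to `v_0` -/
def fvv (n j : ℕ) : ℕ := min (gvv j) (gvv (n-j))

lemma fuu_eq (n j : ℕ) : fuu n j = guu (min j (n-j)) := by
  rcases le_total j (n-j) with h | h
  · rw [min_eq_left h, fuu, min_eq_left] <;> (simp only [guu]; omega)
  · rw [min_eq_right h, fuu, min_eq_right] <;> (simp only [guu]; omega)

lemma fuv_eq (n j : ℕ) : fuv n j = guv (min j (n-j)) := by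
  rcases le_total j (n-j) with h | h
  · rw [min_eq_left h, fuv, min_eq_left] <;> (simp only [guv]; omega)
  · rw [min_eq_right h, fuv, min_eq_right] <;> (simp only [guv]; omega)

lemma modcase (n a : ℕ) (h : a < 2*n) : a % n = if a < n then a else a - n := by
  split
  · exact Nat.mod_eq_of_lt ‹_›
  · rw [Nat.mod_eq_sub_mod (by omega), Nat.mod_eq_of_lt (by omega)]

lemma fuv_pos (n j : ℕ) : 0 < fuv n j := by
  simp only [fuv, guv]; omega

section NatLemmas
variable {n j : ℕ} (hn : 11 ≤ n) (hj : j < n)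
include hn hj

lemma lip_uu : fuu n ((j+1)%n) ≤ fuu n j + 1 ∧ fuu n j ≤ fuu n ((j+1)%n) + 1 := by
  rw [modcase n (j+1) (by omega)]
  split <;> (simp only [fuu_eq, guu]; omega)

lemma lip_uv : fuv n ((j+1)%n) ≤ fuv n j + 1 ∧ fuv n j ≤ fuv n ((j+1)%n) + 1 := by
  rw [modcase n (j+1) (by omega)]
  split <;> (simp only [fuv_eq, guv]; omega)

lemma lip_uv2 : fuv n ((j+2)%n) ≤ fuv n j + 1 ∧ fuv n j ≤ fuv n ((j+2)%n) + 1 := by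
  rw [modcase n (j+2) (by omega)]
  split <;> (simp only [fuv_eq, guv]; omega)

lemma lip_vv2 : fvv n ((j+2)%n) ≤ fvv n j + 1 ∧ fvv n j ≤ fvv n ((j+2)%n) + 1 := by
  rw [modcase n (j+2) (by omega)]
  split <;>
    (simp only [fvv, gvv]
     rcases Nat.even_or_odd j with ⟨a,ha⟩|⟨a,ha⟩ <;> rcases Nat.even_or_odd n with ⟨b,hb⟩|⟨b,hb⟩ <;>
       subst ha hb <;> omega)

lemma lip_spoke_u : fuu n j ≤ fuv n j + 1 ∧ fuv n j ≤ fuu n j + 1 := by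
  simp only [fuu_eq, fuv_eq, guu, guv]; omega

lemma lip_spoke_v : fuv n j ≤ fvv n j + 1 ∧ fvv n j ≤ fuv n j + 1 := by
  simp only [fuv_eq, fvv, guv, gvv]
  rcases Nat.even_or_odd j with ⟨a,ha⟩|⟨a,ha⟩ <;> rcases Nat.even_or_odd n with ⟨b,hb⟩|⟨b,hb⟩ <;>
    subst ha hb <;> omega

lemma dec_u_fu (h0 : 0 < j) :
    fuu n ((j + (n-1)) % n) < fuu n j ∨ fuu n ((j+1)%n) < fuu n j ∨ fuv n j < fuu n j := by
  rw [modcase n (j+(n-1)) (by omega), modcase n (j+1) (by omega)]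
  split <;> split <;> (simp only [fuu_eq, fuv_eq, guu, guv]; omega)

lemma dec_v_fu :
    fuu n j < fuv n j ∨ fuv n ((j+2)%n) < fuv n j ∨ fuv n ((j + (n-2)) % n) < fuv n j := by
  rw [modcase n (j+(n-2)) (by omega), modcase n (j+2) (by omega)]
  split <;> split <;> (simp only [fuu_eq, fuv_eq, guu, guv]; omega)

lemma dec_u_fv :
    fvv n j < fuv n j ∨ fuv n ((j+1)%n) < fuv n j ∨ fuv n ((j + (n-1)) % n) < fuv n j := by
  rw [modcase n (j+(n-1)) (by omega), modcase n (j+1) (by omega)]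
  split <;> split <;>
    (simp only [fvv, fuv_eq, gvv, guv]
     rcases Nat.even_or_odd j with ⟨a,ha⟩|⟨a,ha⟩ <;> rcases Nat.even_or_odd n with ⟨b,hb⟩|⟨b,hb⟩ <;>
       subst ha hb <;> omega)

lemma dec_v_fv (h0 : 0 < j) :
    fuv n j < fvv n j ∨ fvv n ((j+2)%n) < fvv n j ∨ fvv n ((j + (n-2)) % n) < fvv n j := by
  rw [modcase n (j+(n-2)) (by omega), modcase n (j+2) (by omega)]
  split <;> split <;>
    (simp only [fvv, fuv_eq, gvv, guv]
     rcases Nat.even_or_odd j with ⟨a,ha⟩|⟨a,ha⟩ <;> rcases Nat.even_or_odd n with ⟨b,hb⟩|⟨b,hb⟩ <;>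
       subst ha hb <;> omega)

lemma fuu_zero : fuu n j = 0 ↔ j = 0 := by
  simp only [fuu_eq, guu]; omega

lemma fvv_zero : fvv n j = 0 ↔ j = 0 := by
  simp only [fvv, gvv]
  rcases Nat.even_or_odd j with ⟨a,ha⟩|⟨a,ha⟩ <;> rcases Nat.even_or_odd n with ⟨b,hb⟩|⟨b,hb⟩ <;>
    subst ha hb <;> omega

lemma classA (h2 : 2 ≤ j) (h3 : j ≤ n - 2) : fuv n j ≤ fuu n j := by
  simp only [fuu_eq, fuv_eq, guu, guv]; omega

lemma classD (h2 : 4 ≤ j) (h3 : j ≤ n - 4) : fuv n j < fuu n j := by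
  simp only [fuu_eq, fuv_eq, guu, guv]; omega

lemma classB (h : fuv n j < fvv n j) : fvv n ((j+1)%n) < fuv n ((j+1)%n) := by
  rw [modcase n (j+1) (by omega)]
  split <;>
    (simp only [fvv, fuv_eq, gvv, guv] at h ⊢
     rcases Nat.even_or_odd j with ⟨a,ha⟩|⟨a,ha⟩ <;> rcases Nat.even_or_odd n with ⟨b,hb⟩|⟨b,hb⟩ <;>
       subst ha hb <;> omega)

end NatLemmas

/-- candidate distance function to `u_0`. -/
def fuV (n : ℕ) : ZMod n ⊕ ZMod n → ℕ
  | .inl i => fuu n i.val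
  | .inr i => fuv n i.val

/-- candidate distance function to `v_0`. -/
def fvV (n : ℕ) : ZMod n ⊕ ZMod n → ℕ
  | .inl i => fuv n i.val
  | .inr i => fvv n i.val

/-- the injection from `W_{u_0 v_0}` to `W_{v_0 u_0}`. -/
def phiV (n : ℕ) : ZMod n ⊕ ZMod n → ZMod n ⊕ ZMod n
  | .inl i =>
      if i.val = 0 then .inl ((n-5 : ℕ) : ZMod n)
      else if i.val = 1 then .inl ((4 : ℕ) : ZMod n)
      else if i.val = n - 1 then .inl ((n-4 : ℕ) : ZMod n)
      else .inl i
  | .inr i => .inr (i + 1)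

lemma walk_lower {V : Type*} {G : SimpleGraph V} {y : V} {f : V → ℕ} (h0 : f y = 0)
    (hlip : ∀ a b, G.Adj a b → f a ≤ f b + 1) :
    ∀ x (p : G.Walk x y), f x ≤ p.length := by
  intro x p
  induction p with
  | nil => simp [h0]
  | cons h q ih =>
    have h1 := hlip _ _ h
    simp only [SimpleGraph.Walk.length_cons]
    omega

/-- BFS-labelling characterisation of graph distance. -/
lemma dist_formula {V : Type*} (G : SimpleGraph V) (y : V) (f : V → ℕ)
    (h0 : f y = 0)
    (hzero : ∀ x, f x = 0 → x = y)
    (hlip : ∀ a b, G.Adj a b → f a ≤ f b + 1)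
    (hdec : ∀ x, 0 < f x → ∃ z, G.Adj x z ∧ f z < f x) :
    ∀ x, G.dist x y = f x := by
  have exwalk : ∀ k x, f x ≤ k → ∃ p : G.Walk x y, p.length ≤ f x := by
    intro k
    induction k with
    | zero =>
      intro x hx
      have hx0 := hzero x (Nat.le_zero.mp hx)
      subst hx0
      exact ⟨SimpleGraph.Walk.nil, by simp⟩
    | succ k ih =>
      intro x hx
      by_cases h : f x = 0
      · have hx0 := hzero x h
        subst hx0
        exact ⟨SimpleGraph.Walk.nil, by simp⟩
      · obtain ⟨z, hadj, hz⟩ := hdec x (Nat.pos_of_ne_zero h)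
        obtain ⟨p, hp⟩ := ih z (by omega)
        refine ⟨SimpleGraph.Walk.cons hadj p, ?_⟩
        simp only [SimpleGraph.Walk.length_cons]
        omega
  intro x
  obtain ⟨p, hp⟩ := exwalk (f x) x le_rfl
  have h1 : G.dist x y ≤ f x := le_trans (SimpleGraph.dist_le p) hp
  have hr : G.Reachable x y := ⟨p⟩
  obtain ⟨q, hq⟩ := hr.exists_walk_length_eq_dist
  have h2 : f x ≤ G.dist x y := hq ▸ walk_lower h0 hlip x q
  omega

end GP2Aux

open GP2Aux in
theorem stmt_4 (n : ℕ) (hn : 10 < n) :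
    ¬ IsDistBalanced (genPetersen n 2) := by
  haveI : NeZero n := ⟨by omega⟩
  haveI : Fact (1 < n) := ⟨by omega⟩
  have hn' : 11 ≤ n := hn
  set G := genPetersen n 2 with hG
  -- basic ZMod facts
  have hvlt : ∀ i : ZMod n, i.val < n := fun i => ZMod.val_lt i
  have hvadd : ∀ (i : ZMod n) (k : ℕ), k < n → (i + (k : ZMod n)).val = (i.val + k) % n := by
    intro i k hk
    rw [ZMod.val_add, ZMod.val_natCast, Nat.mod_eq_of_lt hk]
  have hvone : ∀ i : ZMod n, (i + 1).val = (i.val + 1) % n := by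
    intro i
    rw [ZMod.val_add, ZMod.val_one]
  have hcne : ∀ k : ℕ, 0 < k → k < n → ((k : ℕ) : ZMod n) ≠ 0 := by
    intro k h1 h2 h
    have := congrArg ZMod.val h
    rw [ZMod.val_natCast, Nat.mod_eq_of_lt h2, ZMod.val_zero] at this
    omega
  have hvc : ∀ k : ℕ, k < n → ((k : ℕ) : ZMod n).val = k := by
    intro k hk
    rw [ZMod.val_natCast, Nat.mod_eq_of_lt hk]
  have hcast1 : ((n - 1 : ℕ) : ZMod n) + 1 = 0 := by
    have h1 : ((1 : ℕ) : ZMod n) = 1 := Nat.cast_one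
    rw [← h1, ← Nat.cast_add]
    rw [show n - 1 + 1 = n by omega, ZMod.natCast_self]
  have hcast2 : ((n - 2 : ℕ) : ZMod n) + ((2 : ℕ) : ZMod n) = 0 := by
    rw [← Nat.cast_add, show n - 2 + 2 = n by omega, ZMod.natCast_self]
  -- adjacency helpers
  have hadj_succ : ∀ i : ZMod n, G.Adj (.inl i) (.inl (i + 1)) := by
    intro i
    rw [hG, genPetersen, SimpleGraph.fromRel_adj]
    refine ⟨?_, Or.inl rfl⟩
    intro h
    have h2 : i = i + 1 := Sum.inl_injective h
    have h3 : (1 : ZMod n) = 0 := left_eq_add.mp h2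
    have := congrArg ZMod.val h3
    rw [ZMod.val_one, ZMod.val_zero] at this
    omega
  have hadj_pred : ∀ i : ZMod n, G.Adj (.inl i) (.inl (i + ((n-1 : ℕ) : ZMod n))) := by
    intro i
    rw [hG, genPetersen, SimpleGraph.fromRel_adj]
    constructor
    · intro h
      have h2 : i = i + ((n-1:ℕ) : ZMod n) := Sum.inl_injective h
      exact hcne (n-1) (by omega) (by omega) (left_eq_add.mp h2)
    · right
      show i = i + ((n-1:ℕ) : ZMod n) + 1
      rw [add_assoc, hcast1, add_zero]
  have hadj_spoke : ∀ i : ZMod n, G.Adj (.inl i) (.inr i) := by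
    intro i
    rw [hG, genPetersen, SimpleGraph.fromRel_adj]
    exact ⟨by simp, Or.inl rfl⟩
  have hadj_inner : ∀ i : ZMod n, G.Adj (.inr i) (.inr (i + ((2:ℕ) : ZMod n))) := by
    intro i
    rw [hG, genPetersen, SimpleGraph.fromRel_adj]
    refine ⟨?_, Or.inl rfl⟩
    intro h
    have h2 : i = i + ((2:ℕ) : ZMod n) := Sum.inr_injective h
    exact hcne 2 (by omega) (by omega) (left_eq_add.mp h2)
  have hadj_inner_pred : ∀ i : ZMod n, G.Adj (.inr i) (.inr (i + ((n-2 : ℕ) : ZMod n))) := by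
    intro i
    rw [hG, genPetersen, SimpleGraph.fromRel_adj]
    constructor
    · intro h
      have h2 : i = i + ((n-2:ℕ) : ZMod n) := Sum.inr_injective h
      exact hcne (n-2) (by omega) (by omega) (left_eq_add.mp h2)
    · right
      show i = i + ((n-2:ℕ) : ZMod n) + ((2:ℕ) : ZMod n)
      rw [add_assoc, hcast2, add_zero]
  -- distance to u_0 equals fuV n
  have distu : ∀ x, G.dist x (.inl 0) = fuV n x := by
    apply dist_formula
    · show fuu n (ZMod.val (0 : ZMod n)) = 0
      rw [ZMod.val_zero]
      exact (fuu_zero hn' (by omega)).mpr rfl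
    · intro x hx
      cases x with
      | inl i =>
        have h1 : i.val = 0 := (fuu_zero hn' (hvlt i)).mp hx
        have h2 : i = 0 := by
          have := congrArg (Nat.cast : ℕ → ZMod n) h1
          rwa [ZMod.natCast_val, ZMod.cast_id, Nat.cast_zero] at this
        rw [h2]
      | inr i =>
        exact absurd hx (by have := fuv_pos n i.val; simp only [fuV]; omega)
    · intro a b hab
      rw [hG, genPetersen, SimpleGraph.fromRel_adj] at hab
      obtain ⟨-, h | h⟩ := hab
      · cases a with
        | inl i =>
          cases b with
          | inl j =>
            have h' : j = i + 1 := h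
            subst h'
            show fuu n i.val ≤ fuu n (i+1).val + 1
            rw [hvone i]
            exact (lip_uu hn' (hvlt i)).2
          | inr j =>
            have h' : i = j := h
            subst h'
            exact (lip_spoke_u hn' (hvlt i)).1
        | inr i =>
          cases b with
          | inl j => exact absurd h (by simp)
          | inr j =>
            have h' : j = i + ((2:ℕ) : ZMod n) := h
            subst h'
            show fuv n i.val ≤ fuv n (i + ((2:ℕ):ZMod n)).val + 1
            rw [hvadd i 2 (by omega)]
            exact (lip_uv2 hn' (hvlt i)).2
      · cases a with
        | inl i =>
          cases b with
          | inl j =>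
            have h' : i = j + 1 := h
            subst h'
            show fuu n (j+1).val ≤ fuu n j.val + 1
            rw [hvone j]
            exact (lip_uu hn' (hvlt j)).1
          | inr j => exact absurd h (by simp)
        | inr i =>
          cases b with
          | inl j =>
            have h' : j = i := h
            rw [h']
            exact (lip_spoke_u hn' (hvlt i)).2
          | inr j =>
            have h' : i = j + ((2:ℕ) : ZMod n) := h
            subst h'
            show fuv n (j + ((2:ℕ):ZMod n)).val ≤ fuv n j.val + 1
            rw [hvadd j 2 (by omega)]
            exact (lip_uv2 hn' (hvlt j)).1
    · intro x hx
      cases x with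
      | inl i =>
        have hj0 : 0 < i.val := by
          by_contra h
          have h1 : i.val = 0 := by omega
          have h2 : fuu n i.val = 0 := by rw [h1]; exact (fuu_zero hn' (by omega)).mpr rfl
          simp only [fuV] at hx
          omega
        rcases dec_u_fu hn' (hvlt i) hj0 with h | h | h
        · exact ⟨.inl (i + ((n-1:ℕ) : ZMod n)), hadj_pred i, by
            show fuu n (i + ((n-1:ℕ):ZMod n)).val < fuu n i.val
            rw [hvadd i (n-1) (by omega)]; exact h⟩
        · exact ⟨.inl (i + 1), hadj_succ i, by
            show fuu n (i + 1).val < fuu n i.val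
            rw [hvone i]; exact h⟩
        · exact ⟨.inr i, hadj_spoke i, h⟩
      | inr i =>
        rcases dec_v_fu hn' (hvlt i) with h | h | h
        · exact ⟨.inl i, (hadj_spoke i).symm, h⟩
        · exact ⟨.inr (i + ((2:ℕ) : ZMod n)), hadj_inner i, by
            show fuv n (i + ((2:ℕ):ZMod n)).val < fuv n i.val
            rw [hvadd i 2 (by omega)]; exact h⟩
        · exact ⟨.inr (i + ((n-2:ℕ) : ZMod n)), hadj_inner_pred i, by
            show fuv n (i + ((n-2:ℕ):ZMod n)).val < fuv n i.val
            rw [hvadd i (n-2) (by omega)]; exact h⟩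
  -- distance to v_0 equals fvV n
  have distv : ∀ x, G.dist x (.inr 0) = fvV n x := by
    apply dist_formula
    · show fvv n (ZMod.val (0 : ZMod n)) = 0
      rw [ZMod.val_zero]
      exact (fvv_zero hn' (by omega)).mpr rfl
    · intro x hx
      cases x with
      | inr i =>
        have h1 : i.val = 0 := (fvv_zero hn' (hvlt i)).mp hx
        have h2 : i = 0 := by
          have := congrArg (Nat.cast : ℕ → ZMod n) h1
          rwa [ZMod.natCast_val, ZMod.cast_id, Nat.cast_zero] at this
        rw [h2]
      | inl i =>
        exact absurd hx (by have := fuv_pos n i.val; simp only [fvV]; omega)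
    · intro a b hab
      rw [hG, genPetersen, SimpleGraph.fromRel_adj] at hab
      obtain ⟨-, h | h⟩ := hab
      · cases a with
        | inl i =>
          cases b with
          | inl j =>
            have h' : j = i + 1 := h
            subst h'
            show fuv n i.val ≤ fuv n (i+1).val + 1
            rw [hvone i]
            exact (lip_uv hn' (hvlt i)).2
          | inr j =>
            have h' : i = j := h
            subst h'
            exact (lip_spoke_v hn' (hvlt i)).1
        | inr i =>
          cases b with
          | inl j => exact absurd h (by simp)
          | inr j =>
            have h' : j = i + ((2:ℕ) : ZMod n) := h
            subst h'
            show fvv n i.val ≤ fvv n (i + ((2:ℕ):ZMod n)).val + 1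
            rw [hvadd i 2 (by omega)]
            exact (lip_vv2 hn' (hvlt i)).2
      · cases a with
        | inl i =>
          cases b with
          | inl j =>
            have h' : i = j + 1 := h
            subst h'
            show fuv n (j+1).val ≤ fuv n j.val + 1
            rw [hvone j]
            exact (lip_uv hn' (hvlt j)).1
          | inr j => exact absurd h (by simp)
        | inr i =>
          cases b with
          | inl j =>
            have h' : j = i := h
            rw [h']
            exact (lip_spoke_v hn' (hvlt i)).2
          | inr j =>
            have h' : i = j + ((2:ℕ) : ZMod n) := h
            subst h'
            show fvv n (j + ((2:ℕ):ZMod n)).val ≤ fvv n j.val + 1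
            rw [hvadd j 2 (by omega)]
            exact (lip_vv2 hn' (hvlt j)).1
    · intro x hx
      cases x with
      | inl i =>
        rcases dec_u_fv hn' (hvlt i) with h | h | h
        · exact ⟨.inr i, hadj_spoke i, h⟩
        · exact ⟨.inl (i + 1), hadj_succ i, by
            show fuv n (i + 1).val < fuv n i.val
            rw [hvone i]; exact h⟩
        · exact ⟨.inl (i + ((n-1:ℕ) : ZMod n)), hadj_pred i, by
            show fuv n (i + ((n-1:ℕ):ZMod n)).val < fuv n i.val
            rw [hvadd i (n-1) (by omega)]; exact h⟩
      | inr i =>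
        have hj0 : 0 < i.val := by
          by_contra h
          have h1 : i.val = 0 := by omega
          have h2 : fvv n i.val = 0 := by rw [h1]; exact (fvv_zero hn' (by omega)).mpr rfl
          simp only [fvV] at hx
          omega
        rcases dec_v_fv hn' (hvlt i) hj0 with h | h | h
        · exact ⟨.inl i, (hadj_spoke i).symm, h⟩
        · exact ⟨.inr (i + ((2:ℕ) : ZMod n)), hadj_inner i, by
            show fvv n (i + ((2:ℕ):ZMod n)).val < fvv n i.val
            rw [hvadd i 2 (by omega)]; exact h⟩
        · exact ⟨.inr (i + ((n-2:ℕ) : ZMod n)), hadj_inner_pred i, by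
            show fvv n (i + ((n-2:ℕ):ZMod n)).val < fvv n i.val
            rw [hvadd i (n-2) (by omega)]; exact h⟩
  -- the two sets for the spoke edge u_0 v_0
  intro hbal
  have hkey := hbal (.inl (0 : ZMod n)) (.inr (0 : ZMod n)) (hadj_spoke 0)
  set s : Set (ZMod n ⊕ ZMod n) := closerSet G (.inl 0) (.inr 0) with hs
  set t : Set (ZMod n ⊕ ZMod n) := closerSet G (.inr 0) (.inl 0) with ht
  have hmem_s : ∀ w, w ∈ s ↔ fuV n w < fvV n w := by
    intro w
    rw [hs]
    show G.dist w (.inl 0) < G.dist w (.inr 0) ↔ _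
    rw [distu w, distv w]
  have hmem_t : ∀ w, w ∈ t ↔ fvV n w < fuV n w := by
    intro w
    rw [ht]
    show G.dist w (.inr 0) < G.dist w (.inl 0) ↔ _
    rw [distu w, distv w]
  -- outer members of s have index 0, 1 or n-1
  have houter : ∀ i : ZMod n, Sum.inl i ∈ s → i.val = 0 ∨ i.val = 1 ∨ i.val = n - 1 := by
    intro i hi
    rw [hmem_s] at hi
    simp only [fuV, fvV] at hi
    have hvl := hvlt i
    by_contra h
    push_neg at h
    have := classA hn' (hvlt i) (by omega) (by omega)
    omega
  -- φ values on outer members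
  have hφc : ∀ i : ZMod n, (i.val = 0 ∨ i.val = 1 ∨ i.val = n-1) →
      ∃ c : ℕ, c < n ∧ phiV n (.inl i) = .inl ((c : ℕ) : ZMod n) ∧
        ((i.val = 0 ∧ c = n-5) ∨ (i.val = 1 ∧ c = 4) ∨ (i.val = n-1 ∧ c = n-4)) := by
    intro i hi
    rcases hi with h | h | h
    · refine ⟨n-5, by omega, ?_, Or.inl ⟨h, rfl⟩⟩
      simp only [phiV, h]
      simp
    · refine ⟨4, by omega, ?_, Or.inr (Or.inl ⟨h, rfl⟩)⟩
      simp only [phiV, h]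
      norm_num
    · refine ⟨n-4, by omega, ?_, Or.inr (Or.inr ⟨h, rfl⟩)⟩
      simp only [phiV, h]
      rw [if_neg (by omega), if_neg (by omega)]
      simp
  -- target membership of suitable outer constants
  have htc : ∀ c : ℕ, 4 ≤ c → c ≤ n - 4 → Sum.inl ((c : ℕ) : ZMod n) ∈ t := by
    intro c h1 h2
    rw [hmem_t]
    simp only [fuV, fvV]
    rw [hvc c (by omega)]
    exact classD hn' (by omega) h1 h2
  have hmaps : ∀ w ∈ s, phiV n w ∈ t := by
    intro w hw
    cases w with
    | inl i =>
      obtain ⟨c, hc1, hc2, hc3⟩ := hφc i (houter i hw)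
      rw [hc2]
      exact htc c (by omega) (by omega)
    | inr i =>
      rw [hmem_s] at hw
      simp only [fuV, fvV] at hw
      have := classB hn' (hvlt i) hw
      show Sum.inr (i+1) ∈ t
      rw [hmem_t]
      simp only [fuV, fvV]
      rw [hvone i]
      exact this
  have hinj : Set.InjOn (phiV n) s := by
    intro a ha b hb hab
    cases a with
    | inl i =>
      cases b with
      | inl j =>
        obtain ⟨c1, hc11, hc12, hc13⟩ := hφc i (houter i ha)
        obtain ⟨c2, hc21, hc22, hc23⟩ := hφc j (houter j hb)
        rw [hc12, hc22] at hab
        have h1 : ((c1 : ℕ) : ZMod n) = ((c2 : ℕ) : ZMod n) := Sum.inl_injective hab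
        have h2 := congrArg ZMod.val h1
        rw [hvc c1 hc11, hvc c2 hc21] at h2
        have h3 : i.val = j.val := by omega
        exact congrArg Sum.inl (ZMod.val_injective n h3)
      | inr j =>
        obtain ⟨c1, hc11, hc12, hc13⟩ := hφc i (houter i ha)
        rw [hc12] at hab
        exact absurd hab (by simp [phiV])
    | inr i =>
      cases b with
      | inl j =>
        obtain ⟨c2, hc21, hc22, hc23⟩ := hφc j (houter j hb)
        rw [show phiV n (Sum.inr i) = Sum.inr (i+1) from rfl, hc22] at hab
        exact absurd hab (by simp)
      | inr j =>
        have h1 : Sum.inr (α := ZMod n) (i + 1) = Sum.inr (j + 1) := hab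
        have h2 := Sum.inr_injective h1
        exact congrArg Sum.inr (add_right_cancel h2)
  -- u_5 is in t but not in the image
  have hu5t : Sum.inl ((5 : ℕ) : ZMod n) ∈ t := htc 5 (by omega) (by omega)
  have hu5img : Sum.inl ((5 : ℕ) : ZMod n) ∉ phiV n '' s := by
    rintro ⟨w, hw, hweq⟩
    cases w with
    | inr i => exact absurd hweq (by simp [phiV])
    | inl i =>
      obtain ⟨c, hc1, hc2, hc3⟩ := hφc i (houter i hw)
      rw [hc2] at hweq
      have h1 := congrArg ZMod.val (Sum.inl_injective hweq)
      rw [hvc c hc1, hvc 5 (by omega)] at h1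
      omega
  -- conclude
  have hcard1 : (phiV n '' s).ncard = s.ncard := Set.ncard_image_of_injOn hinj
  have hss : phiV n '' s ⊂ t := by
    constructor
    · rintro z ⟨w, hw, rfl⟩
      exact hmaps w hw
    · intro h
      exact hu5img (h hu5t)
  have hcard2 : (phiV n '' s).ncard < t.ncard := Set.ncard_lt_ncard hss (Set.toFinite t)
  omega
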